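/- Let d ≥ 1 and let δ, K, M, c₁ > 0. Let p, σ ∈ L¹(ℝ^d) with ∫|p| ≤ K and ∫|σ| ≤ M, and suppose |(p*σ)(x)| + |σ(x)| ≤ c₁ for almost every x with |x| ≥ δ. Then for every integer n ≥ 1 there exists a constant c_n = c_n(n, c₁, K, M) such that |(p*σ^{*n})(x)| ≤ c_n for almost every x with |x| ≥ nδ. -/

import Mathlib

open MeasureTheory

/-- Convolution of two functions on `ℝ^d` (Bochner integral). -/
noncomputable def convolve {d : ℕ} (f g : EuclideanSpace ℝ (Fin d) → ℝ) :
    EuclideanSpace ℝ (Fin d) → ℝ := fun x => ∫ y, f (x - y) * g y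

/-- `convPowFun σ n = σ^{*(n+1)}`, the `(n+1)`-fold convolution power of `σ`
(so `convPowFun σ 0 = σ^{*1} = σ`). -/
noncomputable def convPowFun {d : ℕ} (σ : EuclideanSpace ℝ (Fin d) → ℝ) :
    ℕ → EuclideanSpace ℝ (Fin d) → ℝ
  | 0 => σ
  | n + 1 => convolve (convPowFun σ n) σ

open scoped Convolution

variable {d : ℕ}

lemma convolve_eq (f g : EuclideanSpace ℝ (Fin d) → ℝ) :
    convolve f g = (g ⋆[ContinuousLinearMap.mul ℝ ℝ] f) := by
  funext x
  simp only [convolve, convolution_def, ContinuousLinearMap.mul_apply']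
  exact integral_congr_ae (Filter.Eventually.of_forall fun y => mul_comm _ _)

lemma integrable_convolve {f g : EuclideanSpace ℝ (Fin d) → ℝ}
    (hf : Integrable f) (hg : Integrable g) : Integrable (convolve f g) := by
  rw [convolve_eq]
  exact hg.integrable_convolution _ hf

lemma l1_convolve {f g : EuclideanSpace ℝ (Fin d) → ℝ}
    (hf : Integrable f) (hg : Integrable g) :
    (∫ x, |convolve f g x|) ≤ (∫ x, |f x|) * (∫ x, |g x|) := by
  have hint : Integrable (fun p : (EuclideanSpace ℝ (Fin d)) × (EuclideanSpace ℝ (Fin d)) =>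
      g p.2 * f (p.1 - p.2)) ((volume : Measure (EuclideanSpace ℝ (Fin d))).prod volume) := by
    have := hg.convolution_integrand (ContinuousLinearMap.mul ℝ ℝ) hf
    simpa using this
  have step1 : (∫ x, |convolve f g x|) ≤ ∫ x, ∫ y, ‖g y * f (x - y)‖ := by
    refine integral_mono (integrable_convolve hf hg).abs hint.norm.integral_prod_left fun x => ?_
    calc |convolve f g x| = ‖∫ y, f (x - y) * g y‖ := (Real.norm_eq_abs _).symm
      _ ≤ ∫ y, ‖f (x - y) * g y‖ := norm_integral_le_integral_norm _
      _ = ∫ y, ‖g y * f (x - y)‖ :=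
        integral_congr_ae (Filter.Eventually.of_forall fun y => congrArg norm (mul_comm (f (x - y)) (g y)))
  have step2 : (∫ x, ∫ y, ‖g y * f (x - y)‖) = ∫ y, ∫ x, ‖g y * f (x - y)‖ :=
    integral_integral_swap hint.norm
  have step3 : (∫ y, ∫ x, ‖g y * f (x - y)‖) = (∫ x, |f x|) * (∫ x, |g x|) := by
    have : ∀ y : EuclideanSpace ℝ (Fin d),
        (∫ x, ‖g y * f (x - y)‖) = |g y| * ∫ x, |f x| := by
      intro y
      simp only [norm_mul, Real.norm_eq_abs]
      rw [integral_const_mul]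
      congr 1
      exact integral_sub_right_eq_self (fun t => |f t|) y
    rw [integral_congr_ae (Filter.Eventually.of_forall this), integral_mul_const, mul_comm]
  calc (∫ x, |convolve f g x|) ≤ ∫ x, ∫ y, ‖g y * f (x - y)‖ := step1
    _ = _ := by rw [step2, step3]

lemma convolve_assoc_ae {f g k : EuclideanSpace ℝ (Fin d) → ℝ}
    (hf : Integrable f) (hg : Integrable g) (hk : Integrable k) :
    ∀ᵐ x : EuclideanSpace ℝ (Fin d),
      convolve k (convolve g f) x = convolve (convolve k g) f x := by
  -- convolve k (convolve g f) = (f ⋆ g) ⋆ k ; convolve (convolve k g) f = f ⋆ (g ⋆ k)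
  rw [convolve_eq, convolve_eq, convolve_eq, convolve_eq]
  have h1 : ∀ᵐ y : EuclideanSpace ℝ (Fin d) ∂volume,
      ConvolutionExistsAt f g y (ContinuousLinearMap.mul ℝ ℝ) volume :=
    hf.ae_convolution_exists _ hg
  have h2 : ∀ᵐ x : EuclideanSpace ℝ (Fin d) ∂volume,
      ConvolutionExistsAt (fun t => ‖g t‖) (fun t => ‖k t‖) x (ContinuousLinearMap.mul ℝ ℝ) volume :=
    hg.norm.ae_convolution_exists _ hk.norm
  have h3 : ∀ᵐ x₀ : EuclideanSpace ℝ (Fin d) ∂volume,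
      ConvolutionExistsAt (fun t => ‖f t‖)
        ((fun t => ‖g t‖) ⋆[ContinuousLinearMap.mul ℝ ℝ] fun t => ‖k t‖) x₀
        (ContinuousLinearMap.mul ℝ ℝ) volume :=
    hf.norm.ae_convolution_exists _ (hg.norm.integrable_convolution _ hk.norm)
  filter_upwards [h3] with x₀ hx₀
  exact convolution_assoc (ContinuousLinearMap.mul ℝ ℝ) (ContinuousLinearMap.mul ℝ ℝ)
    (ContinuousLinearMap.mul ℝ ℝ) (ContinuousLinearMap.mul ℝ ℝ)
    (fun x y z => mul_assoc x y z) hf.aestronglyMeasurable hg.aestronglyMeasurable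
    hk.aestronglyMeasurable h1 h2 hx₀

/-- Let `p, σ ∈ L¹(ℝ^d)` with `∫|p| ≤ K`, `∫|σ| ≤ M`, and suppose
`|(p*σ)(x)| + |σ(x)| ≤ c₁` for a.e. `|x| ≥ δ`. Then for every `n ≥ 1` (here
`convPowFun σ n = σ^{*(n+1)}` ranges over all `σ^{*n}`, `n ≥ 1`) there is a constant
`cₙ = cₙ(n, c₁, K, M)` such that `|(p * σ^{*n})(x)| ≤ cₙ` for a.e. `|x| ≥ n δ`. -/
theorem convolution_power_bound (d : ℕ) (hd : 1 ≤ d)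
    (δ K M c₁ : ℝ) (hδ : 0 < δ) (hK : 0 < K) (hM : 0 < M) (hc₁ : 0 < c₁)
    (p σ : EuclideanSpace ℝ (Fin d) → ℝ)
    (hp : Integrable p) (hσ : Integrable σ)
    (hpK : (∫ x, |p x|) ≤ K) (hσM : (∫ x, |σ x|) ≤ M)
    (h1 : ∀ᵐ x : EuclideanSpace ℝ (Fin d),
      δ ≤ ‖x‖ → |convolve p σ x| + |σ x| ≤ c₁) :
    ∀ n : ℕ, ∃ cn : ℝ,
      ∀ᵐ x : EuclideanSpace ℝ (Fin d),
        ((n : ℝ) + 1) * δ ≤ ‖x‖ → |convolve p (convPowFun σ n) x| ≤ cn := by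
  have hσc : ∀ᵐ y : EuclideanSpace ℝ (Fin d), δ ≤ ‖y‖ → |σ y| ≤ c₁ :=
    h1.mono fun y hy h => le_trans (le_add_of_nonneg_left (abs_nonneg _)) (hy h)
  have hpow : ∀ n, Integrable (convPowFun σ n) ∧ (∫ x, |convPowFun σ n x|) ≤ M ^ (n + 1) := by
    intro n
    induction n with
    | zero => exact ⟨hσ, by simpa [convPowFun] using hσM⟩
    | succ n ih =>
      refine ⟨integrable_convolve ih.1 hσ, ?_⟩
      calc (∫ x, |convPowFun σ (n+1) x|)
          ≤ (∫ x, |convPowFun σ n x|) * (∫ x, |σ x|) := l1_convolve ih.1 hσ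
        _ ≤ M ^ (n + 1) * M := by
            apply mul_le_mul ih.2 hσM (integral_nonneg fun x => abs_nonneg _)
            positivity
        _ = M ^ (n + 2) := by ring
  intro n
  induction n with
  | zero =>
    refine ⟨c₁, h1.mono fun x hx h => ?_⟩
    have : δ ≤ ‖x‖ := by
      have : ((0 : ℕ) : ℝ) + 1 = 1 := by norm_num
      nlinarith [h]
    exact le_trans (le_add_of_nonneg_right (abs_nonneg _)) (hx this)
  | succ n ih =>
    obtain ⟨c, hc⟩ := ih
    set q := convPowFun σ n with hqdef
    have hq : Integrable q := (hpow n).1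
    have hqM : (∫ x, |q x|) ≤ M ^ (n + 1) := (hpow n).2
    set r := convolve p q with hrdef
    have hr : Integrable r := integrable_convolve hp hq
    have hrK : (∫ x, |r x|) ≤ K * M ^ (n + 1) := by
      calc (∫ x, |r x|) ≤ (∫ x, |p x|) * (∫ x, |q x|) := l1_convolve hp hq
        _ ≤ K * M ^ (n + 1) :=
          mul_le_mul hpK hqM (integral_nonneg fun x => abs_nonneg _) hK.le
    have hassoc : ∀ᵐ x : EuclideanSpace ℝ (Fin d),
        convolve p (convPowFun σ (n + 1)) x = convolve r σ x := by
      have := convolve_assoc_ae hσ hq hp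
      simpa [convPowFun] using this
    set c' := |c| with hc'def
    have hc' : ∀ᵐ z : EuclideanSpace ℝ (Fin d),
        ((n : ℝ) + 1) * δ ≤ ‖z‖ → |r z| ≤ c' :=
      hc.mono fun z hz h => (hz h).trans (le_abs_self c)
    refine ⟨c' * M + c₁ * (K * M ^ (n + 1)), ?_⟩
    filter_upwards [hassoc] with x hx hnorm
    rw [hx]
    have hxnorm : ((n : ℝ) + 2) * δ ≤ ‖x‖ := by push_cast at hnorm; linarith
    -- translate the a.e. bound on r
    have hrx : ∀ᵐ y : EuclideanSpace ℝ (Fin d),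
        ((n : ℝ) + 1) * δ ≤ ‖x - y‖ → |r (x - y)| ≤ c' :=
      (Measure.measurePreserving_sub_left volume x).quasiMeasurePreserving.ae hc'
    have hdom : Integrable (fun y => c' * |σ y| + c₁ * |r (x - y)|) := by
      exact (hσ.abs.const_mul c').add (((hr.comp_sub_left x).abs).const_mul c₁)
    have hbound : ∀ᵐ y : EuclideanSpace ℝ (Fin d),
        ‖r (x - y) * σ y‖ ≤ c' * |σ y| + c₁ * |r (x - y)| := by
      filter_upwards [hσc, hrx] with y hy1 hy2
      rw [Real.norm_eq_abs, abs_mul]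
      rcases le_or_gt δ ‖y‖ with h | h
      · have : |σ y| ≤ c₁ := hy1 h
        nlinarith [abs_nonneg (r (x - y)), abs_nonneg (σ y), abs_nonneg c,
          mul_le_mul_of_nonneg_left this (abs_nonneg (r (x - y)))]
      · have hsub : ((n : ℝ) + 1) * δ ≤ ‖x - y‖ := by
          have := norm_sub_norm_le x y
          linarith
        have : |r (x - y)| ≤ c' := hy2 hsub
        nlinarith [abs_nonneg (r (x - y)), abs_nonneg (σ y), hc₁.le,
          mul_le_mul_of_nonneg_right this (abs_nonneg (σ y))]
    calc |convolve r σ x| = ‖∫ y, r (x - y) * σ y‖ := (Real.norm_eq_abs _).symm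
      _ ≤ ∫ y, (c' * |σ y| + c₁ * |r (x - y)|) := norm_integral_le_of_norm_le hdom hbound
      _ = c' * (∫ y, |σ y|) + c₁ * (∫ y, |r (x - y)|) := by
          rw [integral_add (hσ.abs.const_mul c') ((hr.comp_sub_left x).abs.const_mul c₁),
            integral_const_mul, integral_const_mul]
      _ = c' * (∫ y, |σ y|) + c₁ * (∫ y, |r y|) := by
          rw [integral_sub_left_eq_self (fun t => |r t|) volume x]
      _ ≤ c' * M + c₁ * (K * M ^ (n + 1)) := by
          have h1 : c' * (∫ y, |σ y|) ≤ c' * M :=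
            mul_le_mul_of_nonneg_left hσM (abs_nonneg c)
          have h2 : c₁ * (∫ y, |r y|) ≤ c₁ * (K * M ^ (n + 1)) :=
            mul_le_mul_of_nonneg_left hrK hc₁.le
          linarith
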